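/- For every k ≥ 1, the total number of up steps in all dispersed Dyck paths of length 2k+1 equals twice the total number of up steps in all dispersed Dyck paths of length 2k; that is, U(2k+1) = 2·U(2k). -/

import Mathlib

inductive DStep | up | down | right
deriving DecidableEq, Repr

instance : Fintype DStep :=
  ⟨{DStep.up, DStep.down, DStep.right}, fun x => by cases x <;> simp⟩

/-- Run a dispersed Dyck path from height `h`; `none` if an illegal step occurs,
otherwise the final height. Down steps require positive height; right steps require height 0. -/
def DStep.run : ℕ → List DStep → Option ℕ
  | h, [] => some h
  | h, .up :: l => DStep.run (h + 1) l
  | h + 1, .down :: l => DStep.run h l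
  | 0, .down :: _ => none
  | 0, .right :: l => DStep.run 0 l
  | _ + 1, .right :: _ => none

/-- A dispersed Dyck path: starts and ends at height 0, all steps legal. -/
def IsDDP (l : List DStep) : Prop := DStep.run 0 l = some 0

instance : DecidablePred IsDDP := fun l => by unfold IsDDP; infer_instance

/-- The finset of all dispersed Dyck paths of length `n`. -/
def DDPs (n : ℕ) : Finset (List.Vector DStep n) :=
  Finset.univ.filter (fun v => IsDDP v.toList)

/-- Number of dispersed Dyck paths of length `n`. -/
def dD (n : ℕ) : ℕ := (DDPs n).card

/-- Total number of up steps over all DDPs of length `n`. -/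
def U (n : ℕ) : ℕ := ∑ v ∈ DDPs n, v.toList.count DStep.up

/-- Total number of down steps over all DDPs of length `n`. -/
def D (n : ℕ) : ℕ := ∑ v ∈ DDPs n, v.toList.count DStep.down

/-- Total number of right steps over all DDPs of length `n`. -/
def R (n : ℕ) : ℕ := ∑ v ∈ DDPs n, v.toList.count DStep.right

/-- `i` is the position of a 1-ascent in `l`: an up step with no adjacent up step. -/
def IsOneAscentAt (l : List DStep) (i : ℕ) : Prop :=
  l[i]? = some .up ∧ l[i + 1]? ≠ some .up ∧ (i = 0 ∨ l[i - 1]? ≠ some .up)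

instance (l : List DStep) : DecidablePred (IsOneAscentAt l) := fun i => by
  unfold IsOneAscentAt; infer_instance

/-- Number of 1-ascents in `l`. -/
def oneAsc (l : List DStep) : ℕ :=
  ((Finset.range l.length).filter (IsOneAscentAt l)).card

/-- Total number of 1-ascents over all DDPs of length `n`. -/
def A (n : ℕ) : ℕ := ∑ v ∈ DDPs n, oneAsc v.toList

/-- Signed final height of a plain path (ignoring any right steps). -/
def psum : List DStep → ℤ
  | [] => 0
  | .up :: l => 1 + psum l
  | .down :: l => -1 + psum l
  | .right :: l => psum l


def consEquiv (n : ℕ) : DStep × List.Vector DStep n ≃ List.Vector DStep (n+1) where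
  toFun p := p.1 ::ᵥ p.2
  invFun v := (v.head, v.tail)
  left_inv := fun p => by simp
  right_inv := fun v => by simp

lemma sum_cons (n : ℕ) (g : List.Vector DStep (n+1) → ℕ) :
    ∑ v : List.Vector DStep (n+1), g v =
      (∑ w : List.Vector DStep n, g (.up ::ᵥ w)) +
      (∑ w : List.Vector DStep n, g (.down ::ᵥ w)) +
      (∑ w : List.Vector DStep n, g (.right ::ᵥ w)) := by
  rw [← Equiv.sum_comp (consEquiv n) g, Fintype.sum_prod_type]
  rw [show (Finset.univ : Finset DStep) = {DStep.up, DStep.down, DStep.right} by decide]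
  rw [Finset.sum_insert (by decide), Finset.sum_insert (by decide), Finset.sum_singleton]
  simp only [consEquiv, Equiv.coe_fn_mk]; ring

def cntF : ℕ → ℕ → ℕ
  | 0, 0 => 1
  | 0, _+1 => 0
  | n+1, 0 => cntF n 1 + cntF n 0
  | n+1, h+1 => cntF n (h+2) + cntF n h

def upsF : ℕ → ℕ → ℕ
  | 0, _ => 0
  | n+1, 0 => (upsF n 1 + cntF n 1) + upsF n 0
  | n+1, h+1 => (upsF n (h+2) + cntF n (h+2)) + upsF n h

-- run equations
instance : Unique (List.Vector DStep 0) := ⟨⟨List.Vector.nil⟩, fun v => v.eq_nil⟩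
lemma run_up (h : ℕ) (l : List DStep) : DStep.run h (.up :: l) = DStep.run (h+1) l := by cases h <;> rfl
lemma run_down (h : ℕ) (l : List DStep) : DStep.run (h+1) (.down :: l) = DStep.run h l := rfl
lemma run_down0 (l : List DStep) : DStep.run 0 (.down :: l) = none := rfl
lemma run_right0 (l : List DStep) : DStep.run 0 (.right :: l) = DStep.run 0 l := rfl
lemma run_right (h : ℕ) (l : List DStep) : DStep.run (h+1) (.right :: l) = none := rfl
lemma run_nil (h : ℕ) : DStep.run h [] = some h := by cases h <;> rfl

lemma cnt_eq (n : ℕ) : ∀ h : ℕ,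
    (∑ v : List.Vector DStep n, if DStep.run h v.toList = some 0 then 1 else 0) = cntF n h := by
  induction n with
  | zero =>
    intro h
    rw [Finset.univ_unique, Finset.sum_singleton]
    have : (default : List.Vector DStep 0).toList = [] := rfl
    rw [this, run_nil]
    cases h with
    | zero => simp [cntF]
    | succ m => simp [cntF]
  | succ n ih =>
    intro h
    rw [sum_cons]
    cases h with
    | zero =>
      simp only [List.Vector.toList_cons, run_up, run_down0, run_right0]
      simp only [ih]
      simp [cntF]
    | succ m =>
      simp only [List.Vector.toList_cons, run_up, run_down, run_right]
      simp only [ih]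
      simp [cntF]

lemma ups_eq (n : ℕ) : ∀ h : ℕ,
    (∑ v : List.Vector DStep n,
      if DStep.run h v.toList = some 0 then v.toList.count DStep.up else 0) = upsF n h := by
  induction n with
  | zero =>
    intro h
    rw [Finset.univ_unique, Finset.sum_singleton]
    have : (default : List.Vector DStep 0).toList = [] := rfl
    rw [this, run_nil]
    simp [upsF]
  | succ n ih =>
    intro h
    rw [sum_cons]
    have key : ∀ (h' : ℕ),
        (∑ w : List.Vector DStep n,
          if DStep.run h' w.toList = some 0 then (DStep.up :: w.toList).count DStep.up else 0)
        = upsF n h' + cntF n h' := by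
      intro h'
      rw [← ih h', ← cnt_eq n h', ← Finset.sum_add_distrib]
      refine Finset.sum_congr rfl fun w _ => ?_
      split <;> simp [List.count_cons]
    have key2 : ∀ (s : DStep) (hs : s ≠ DStep.up) (h' : ℕ),
        (∑ w : List.Vector DStep n,
          if DStep.run h' w.toList = some 0 then (s :: w.toList).count DStep.up else 0)
        = upsF n h' := by
      intro s hs h'
      rw [← ih h']
      refine Finset.sum_congr rfl fun w _ => ?_
      split <;> simp [List.count_cons, hs]
    cases h with
    | zero =>
      simp only [List.Vector.toList_cons, run_up, run_down0, run_right0]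
      rw [key 1, key2 .right (by simp) 0]
      simp [upsF]
    | succ m =>
      simp only [List.Vector.toList_cons, run_up, run_down, run_right]
      rw [key (m+2), key2 .down (by simp) m]
      simp [upsF]

def bS (n m : ℕ) : ℕ := ∑ t ∈ Finset.range m, n.choose t

lemma bS_succ_succ (n m : ℕ) : bS (n+1) (m+1) = bS n (m+1) + bS n m := by
  unfold bS
  rw [Finset.sum_range_succ' (fun t => (n+1).choose t),
      Finset.sum_range_succ' (fun t => n.choose t)]
  simp only [Nat.choose_succ_succ, Nat.choose_zero_right, Finset.sum_add_distrib]
  ring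

lemma central (t : ℕ) : (2*t+2).choose (t+1) = 2 * ((2*t+1).choose t) := by
  have h1 : (2*t+1).choose (t+1) = (2*t+1).choose t := by
    have := Nat.choose_symm (n := 2*t+1) (k := t) (by omega)
    rw [show 2*t+1-t = t+1 by omega] at this
    exact this
  rw [show 2*t+2 = (2*t+1)+1 by ring, Nat.choose_succ_succ, h1]
  ring

lemma pascal (n k : ℕ) : (n+1).choose (k+1) = n.choose k + n.choose (k+1) := by
  rw [Nat.choose_succ_succ]

lemma cntF_big : ∀ n h, n < h → cntF n h = 0 := by
  intro n
  induction n with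
  | zero => intro h hh; match h, hh with | m+1, _ => rfl
  | succ n ih =>
    intro h hh
    match h, hh with
    | m+1, hh =>
      show cntF n (m+2) + cntF n m = 0
      rw [ih (m+2) (by omega), ih m (by omega)]

lemma cntF_eq : ∀ n h, h ≤ n → cntF n h = n.choose ((n-h)/2) := by
  intro n
  induction n with
  | zero => intro h hh; interval_cases h; rfl
  | succ n ih =>
    intro h hh
    cases h with
    | zero =>
      show cntF n 1 + cntF n 0 = (n+1).choose ((n+1-0)/2)
      cases n with
      | zero => rfl
      | succ m =>
        rw [ih 1 (by omega), ih 0 (by omega)]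
        rcases Nat.even_or_odd m with ⟨t, ht⟩ | ⟨t, ht⟩
        · subst ht
          rw [show (t+t+1-1)/2 = t by omega, show (t+t+1-0)/2 = t by omega,
              show (t+t+1+1-0)/2 = t+1 by omega, show t+t+1 = 2*t+1 by ring,
              show 2*t+1+1 = 2*t+2 by ring, central]
          ring
        · subst ht
          rw [show (2*t+1+1-1)/2 = t by omega, show (2*t+1+1-0)/2 = t+1 by omega,
              show (2*t+1+1+1-0)/2 = t+1 by omega,
              show 2*t+1+1+1 = (2*t+1+1)+1 by ring, pascal (2*t+1+1) t]
    | succ m =>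
      show cntF n (m+2) + cntF n m = (n+1).choose ((n+1-(m+1))/2)
      rcases Nat.lt_or_ge n (m+2) with hc | hc
      · -- m = n or m = n-1
        rw [cntF_big n (m+2) (by omega), ih m (by omega)]
        rw [show (n-m)/2 = 0 by omega, show (n+1-(m+1))/2 = 0 by omega]
        simp
      · rw [ih (m+2) (by omega), ih m (by omega)]
        rcases Nat.even_or_odd (n - m) with ⟨t, ht⟩ | ⟨t, ht⟩
        · -- n - m = 2t, t ≥ 1
          obtain ⟨s, rfl⟩ : ∃ s, t = s+1 := ⟨t-1, by omega⟩
          rw [show (n-(m+2))/2 = s by omega, show (n-m)/2 = s+1 by omega,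
              show (n+1-(m+1))/2 = s+1 by omega, pascal]
        · -- n - m = 2t+1, t ≥ 1
          obtain ⟨s, rfl⟩ : ∃ s, t = s+1 := ⟨t-1, by omega⟩
          rw [show (n-(m+2))/2 = s by omega, show (n-m)/2 = s+1 by omega,
              show (n+1-(m+1))/2 = s+1 by omega, pascal]

lemma bS_s (n m : ℕ) : bS n (m+1) = bS n m + n.choose m := Finset.sum_range_succ _ _

lemma upsF_big : ∀ n h, n < h → upsF n h = 0 := by
  intro n
  induction n with
  | zero => intro h _; rfl
  | succ n ih =>
    intro h hh
    match h, hh with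
    | m+1, hh =>
      show (upsF n (m+2) + cntF n (m+2)) + upsF n m = 0
      rw [ih (m+2) (by omega), ih m (by omega), cntF_big n (m+2) (by omega)]

lemma upsF_eq : ∀ n h, upsF n h + bS n ((n-h)/2) = ((n-h)/2) * n.choose ((n-h)/2) := by
  intro n
  induction n with
  | zero => intro h; simp [upsF, bS]
  | succ n ih =>
    intro h
    cases h with
    | zero =>
      show (upsF n 1 + cntF n 1) + upsF n 0 + bS (n+1) ((n+1-0)/2) = ((n+1-0)/2) * (n+1).choose ((n+1-0)/2)
      cases n with
      | zero => simp [upsF, cntF, bS]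
      | succ m =>
        have h1 := ih 1
        have h0 := ih 0
        rw [cntF_eq (m+1) 1 (by omega)]
        rcases Nat.even_or_odd m with ⟨t, ht⟩ | ⟨t, ht⟩
        · -- n = m+1 = 2t+1
          rw [show (m+1-1)/2 = t by omega, show (m+1-0)/2 = t by omega] at *
          rw [show (m+1+1-0)/2 = t+1 by omega, bS_succ_succ, bS_s,
              show m+1+1 = 2*t+2 by omega, central,
              show (2*t+1) = m+1 by omega]
          nlinarith [h1, h0]
        · -- n = m+1 = 2t+2
          rw [show (m+1-1)/2 = t by omega, show (m+1-0)/2 = t+1 by omega] at *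
          rw [show (m+1+1-0)/2 = t+1 by omega, bS_succ_succ, pascal (m+1) t]
          nlinarith [h1, h0]
    | succ m =>
      show (upsF n (m+2) + cntF n (m+2)) + upsF n m + bS (n+1) ((n+1-(m+1))/2)
            = ((n+1-(m+1))/2) * (n+1).choose ((n+1-(m+1))/2)
      rw [show (n+1-(m+1))/2 = (n-m)/2 by omega]
      rcases Nat.lt_or_ge n (m+2) with hc | hc
      · have hz : upsF n m = 0 := by
          rcases Nat.lt_or_ge n m with hm | hm
          · exact upsF_big n m hm
          · have := ih m
            rw [show (n-m)/2 = 0 by omega] at this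
            simpa [bS] using this
        rw [upsF_big n (m+2) (by omega), cntF_big n (m+2) (by omega), hz,
            show (n-m)/2 = 0 by omega]
        simp [bS]
      · obtain ⟨s, hs⟩ : ∃ s, (n-(m+2))/2 = s := ⟨_, rfl⟩
        have h2 := ih (m+2)
        have hm := ih m
        rw [hs] at h2
        rw [show (n-m)/2 = s+1 by omega] at hm ⊢
        rw [cntF_eq n (m+2) (by omega), hs, bS_succ_succ, pascal n s]
        nlinarith [h2, hm]


lemma U_eq (n : ℕ) : U n = upsF n 0 := by
  rw [U, DDPs, Finset.sum_filter, ← ups_eq n 0]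
  refine Finset.sum_congr rfl fun v _ => ?_
  simp only [IsDDP]

theorem up_up_recursion' (k : ℕ) (hk : 1 ≤ k) : U (2 * k + 1) = 2 * U (2 * k) := by
  obtain ⟨j, rfl⟩ : ∃ j, k = j + 1 := ⟨k - 1, by omega⟩
  have e1 := upsF_eq (2*(j+1)) 0
  have e2 := upsF_eq (2*(j+1)+1) 0
  rw [show (2*(j+1)-0)/2 = j+1 by omega, show 2*(j+1) = (2*j+1)+1 by ring] at e1
  rw [show (2*(j+1)+1-0)/2 = j+1 by omega, show 2*(j+1)+1 = ((2*j+1)+1)+1 by ring] at e2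
  rw [U_eq, U_eq, show 2*(j+1)+1 = ((2*j+1)+1)+1 by ring, show 2*(j+1) = (2*j+1)+1 by ring]
  rw [bS_succ_succ, bS_s, pascal ((2*j+1)+1) j] at e2
  rw [bS_s] at e1
  have key := Nat.choose_succ_right_eq ((2*j+1)+1) j
  rw [show (2*j+1)+1-j = j+2 by omega] at key
  nlinarith [e1, e2, key]

/-- For `k ≥ 1`, the total number of up steps in all DDPs of length `2k + 1` is twice
the total number of up steps in all DDPs of length `2k`. -/
theorem up_up_recursion (k : ℕ) (hk : 1 ≤ k) : U (2 * k + 1) = 2 * U (2 * k) := by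
  exact up_up_recursion' k hk
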